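/- Let E be a real inner product space, let φ(V) = ⟨g, V⟩ + (1/2)⟨A V, V⟩ + h(X + V) where g ∈ E, A : E → E is a positive definite self-adjoint linear operator, h : E → ℝ is convex, and X ∈ E. If V₀ minimizes φ over E, then φ(0) - φ(V₀) ≥ (1/2)⟨A V₀, V₀⟩. -/

import Mathlib

open RealInnerProductSpace

theorem stmt_0 {E : Type*} [NormedAddCommGroup E] [InnerProductSpace ℝ E]
    (g X : E) (A : E →ₗ[ℝ] E)
    (hA_sym : ∀ u v : E, ⟪A u, v⟫ = ⟪u, A v⟫)
    (hA_pos : ∀ v : E, v ≠ 0 → 0 < ⟪A v, v⟫)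
    (h : E → ℝ) (hconv : ConvexOn ℝ Set.univ h)
    (φ : E → ℝ)
    (hφ : ∀ V : E, φ V = ⟪g, V⟫ + (1/2) * ⟪A V, V⟫ + h (X + V))
    (V₀ : E) (hmin : ∀ V : E, φ V₀ ≤ φ V) :
    φ 0 - φ V₀ ≥ (1/2) * ⟪A V₀, V₀⟫ := by
  set q : ℝ := ⟪A V₀, V₀⟫ with hq
  set c : ℝ := ⟪g, V₀⟫ + h (X + V₀) - h X with hc
  have key : ∀ t ∈ Set.Ico (0:ℝ) 1, c ≤ -(1 + t) * q / 2 := by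
    intro t ht
    obtain ⟨ht0, ht1⟩ := ht
    have hconvh : h (X + t • V₀) ≤ (1 - t) * h X + t * h (X + V₀) := by
      have := hconv.2 (Set.mem_univ X) (Set.mem_univ (X + V₀))
        (by linarith : (0:ℝ) ≤ 1 - t) ht0 (by ring)
      have hv : (1 - t) • X + t • (X + V₀) = X + t • V₀ := by module
      rw [hv] at this
      simpa [smul_eq_mul] using this
    have hφt : φ (t • V₀) = t * ⟪g, V₀⟫ + (1/2) * (t * t * q) + h (X + t • V₀) := by
      rw [hφ]
      rw [real_inner_smul_right, map_smul, real_inner_smul_left, real_inner_smul_right]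
      ring_nf
      rw [hq]
    have hmin' := hmin (t • V₀)
    rw [hφ V₀, hφt] at hmin'
    nlinarith [hconvh, hmin']
  have hlim : Filter.Tendsto (fun t : ℝ => -(1 + t) * q / 2)
      (nhdsWithin 1 (Set.Ico (0:ℝ) 1)) (nhds (-q)) := by
    have hcont : Continuous (fun t : ℝ => -(1 + t) * q / 2) := by continuity
    have := (hcont.tendsto 1).mono_left
      (nhdsWithin_le_nhds (s := Set.Ico (0:ℝ) 1))
    convert this using 2
    ring
  haveI : (nhdsWithin (1:ℝ) (Set.Ico (0:ℝ) 1)).NeBot := by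
    refine mem_closure_iff_nhdsWithin_neBot.mp ?_
    rw [closure_Ico (by norm_num : (0:ℝ) ≠ 1)]
    exact ⟨by norm_num, le_refl 1⟩
  have hle : c ≤ -q := by
    refine ge_of_tendsto hlim ?_
    exact Filter.eventually_of_mem self_mem_nhdsWithin key
  have hq0 : (0:ℝ) ≤ q := by
    rcases eq_or_ne V₀ 0 with h0 | h0
    · simp [hq, h0]
    · exact le_of_lt (hA_pos V₀ h0)
  rw [hφ 0, hφ V₀]
  simp only [inner_zero_right, map_zero, add_zero]
  simp only [hc] at hle
  linarith
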